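/- arXiv:2603.25601 — 2 statements merged into one kernel-verified Lean document; each statement's English description precedes it below -/
import Mathlib

section
/- Let n, k be natural numbers and let φ : ℝⁿ × ℝᵏ → ℝ be twice continuously differentiable. Let F : ℝⁿ × ℝᵏ → ℝᵏ denote the partial gradient of φ in the θ-variables, F(x,θ) = ∂φ/∂θ(x,θ), and let j : ℝⁿ × ℝᵏ → ℝⁿ × ℝⁿ be the map j(x,θ) = (x, ∂φ/∂x(x,θ)). Fix a point (x₀,θ₀) with F(x₀,θ₀) = 0 (a point of the critical set C_φ). Then for any two vectors u, u' in the kernel of the Fréchet derivative of F at (x₀,θ₀) (the tangent space to C_φ), one has ω(Dj(x₀,θ₀)(u), Dj(x₀,θ₀)(u')) = 0, where Dj(x₀,θ₀) is the Fréchet derivative of j at (x₀,θ₀). (In other words, the image of the critical set of a phase function under the lagrangian map is isotropic for the symplectic form.) -/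
/-- The standard symplectic bilinear form on `ℝⁿ × ℝⁿ`:
`ω((a,b),(c,d)) = ⟨b, c⟩ − ⟨a, d⟩`. -/
noncomputable def symplecticForm (n : ℕ)
    (v w : EuclideanSpace ℝ (Fin n) × EuclideanSpace ℝ (Fin n)) : ℝ :=
  (inner ℝ v.2 w.1 : ℝ) - (inner ℝ v.1 w.2 : ℝ)

/-- Over `ℝ`, the inverse Riesz representation as a genuine continuous linear map. -/
noncomputable def dualIsoReal (Z : Type*) [NormedAddCommGroup Z]
    [InnerProductSpace ℝ Z] [CompleteSpace Z] : (Z →L[ℝ] ℝ) →L[ℝ] Z where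
  toFun := fun ℓ => (InnerProductSpace.toDual ℝ Z).symm ℓ
  map_add' := fun ℓ₁ ℓ₂ => by simp
  map_smul' := fun c ℓ => by simp
  cont := (InnerProductSpace.toDual ℝ Z).symm.continuous

lemma inner_dualIsoReal (Z : Type*) [NormedAddCommGroup Z]
    [InnerProductSpace ℝ Z] [CompleteSpace Z] (ℓ : Z →L[ℝ] ℝ) (x : Z) :
    (inner ℝ (dualIsoReal Z ℓ) x : ℝ) = ℓ x :=
  InnerProductSpace.toDual_symm_apply

lemma dualIsoReal_eq_zero_iff (Z : Type*) [NormedAddCommGroup Z]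
    [InnerProductSpace ℝ Z] [CompleteSpace Z] (ℓ : Z →L[ℝ] ℝ) :
    dualIsoReal Z ℓ = 0 ↔ ℓ = 0 := by
  constructor
  · intro h
    have : ℓ = (InnerProductSpace.toDual ℝ Z) 0 := by
      rw [← h]; exact ((InnerProductSpace.toDual ℝ Z).apply_symm_apply ℓ).symm
    simpa using this
  · intro h; simp [h, dualIsoReal]

/-- For a `C²` phase function `φ(x,θ)`, at a point of the critical set
`C_φ = {∂φ/∂θ = 0}`, the image of the tangent space to `C_φ` (the kernel of
the derivative of `F = ∂φ/∂θ`) under the derivative of the lagrangian map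
`j(x,θ) = (x, ∂φ/∂x(x,θ))` is isotropic for the standard symplectic form. -/
theorem critical_set_image_isotropic (n k : ℕ)
    (φ : EuclideanSpace ℝ (Fin n) × EuclideanSpace ℝ (Fin k) → ℝ)
    (hφ : ContDiff ℝ 2 φ)
    (F : EuclideanSpace ℝ (Fin n) × EuclideanSpace ℝ (Fin k) →
      EuclideanSpace ℝ (Fin k))
    (hF : ∀ p, F p = gradient (fun θ => φ (p.1, θ)) p.2)
    (j : EuclideanSpace ℝ (Fin n) × EuclideanSpace ℝ (Fin k) →
      EuclideanSpace ℝ (Fin n) × EuclideanSpace ℝ (Fin n))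
    (hj : ∀ p, j p = (p.1, gradient (fun x => φ (x, p.2)) p.1))
    (p₀ : EuclideanSpace ℝ (Fin n) × EuclideanSpace ℝ (Fin k))
    (hp₀ : F p₀ = 0)
    (u u' : EuclideanSpace ℝ (Fin n) × EuclideanSpace ℝ (Fin k))
    (hu : u ∈ LinearMap.ker (fderiv ℝ F p₀).toLinearMap)
    (hu' : u' ∈ LinearMap.ker (fderiv ℝ F p₀).toLinearMap) :
    symplecticForm n (fderiv ℝ j p₀ u) (fderiv ℝ j p₀ u') = 0 := by
  have hφd : Differentiable ℝ φ := hφ.differentiable (by norm_num)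
  have hΦ1 : ContDiff ℝ 1 (fderiv ℝ φ) := hφ.fderiv_right (by norm_num)
  have hΦd : Differentiable ℝ (fderiv ℝ φ) := hΦ1.differentiable (by norm_num)
  let X := EuclideanSpace ℝ (Fin n)
  let Y := EuclideanSpace ℝ (Fin k)
  set B : (X × Y) →L[ℝ] (X × Y →L[ℝ] ℝ) := fderiv ℝ (fderiv ℝ φ) p₀ with hBdef
  have hBsymm : ∀ v w, B v w = B w v :=
    second_derivative_symmetric (fun y => (hφd y).hasFDerivAt)
      (hΦd p₀).hasFDerivAt
  set ι₁ : X →L[ℝ] X × Y := ContinuousLinearMap.inl ℝ X Y with hι₁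
  set ι₂ : Y →L[ℝ] X × Y := ContinuousLinearMap.inr ℝ X Y with hι₂
  set T : (X × Y →L[ℝ] ℝ) →L[ℝ] Y :=
    (dualIsoReal Y) ∘L (ContinuousLinearMap.compL ℝ Y (X × Y) ℝ).flip ι₂ with hT
  set S : (X × Y →L[ℝ] ℝ) →L[ℝ] X :=
    (dualIsoReal X) ∘L (ContinuousLinearMap.compL ℝ X (X × Y) ℝ).flip ι₁ with hS
  have hTapp : ∀ ℓ : X × Y →L[ℝ] ℝ, T ℓ = dualIsoReal Y (ℓ ∘L ι₂) := fun ℓ => rfl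
  have hSapp : ∀ ℓ : X × Y →L[ℝ] ℝ, S ℓ = dualIsoReal X (ℓ ∘L ι₁) := fun ℓ => rfl
  -- F = T ∘ fderiv φ
  have hFeq : F = fun p => T (fderiv ℝ φ p) := by
    funext p
    rw [hF p, hTapp, gradient]
    have h1 : HasFDerivAt (fun θ : Y => φ (p.1, θ)) ((fderiv ℝ φ p) ∘L ι₂) p.2 := by
      have := (hφd p).hasFDerivAt.comp p.2 (hasFDerivAt_prodMk_right (𝕜 := ℝ) p.1 p.2)
      exact this
    rw [h1.fderiv]
    rfl
  -- j = fun p => (p.1, S (fderiv φ p))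
  have hjeq : j = fun p => (p.1, S (fderiv ℝ φ p)) := by
    funext p
    rw [hj p, hSapp, gradient]
    have h1 : HasFDerivAt (fun x : X => φ (x, p.2)) ((fderiv ℝ φ p) ∘L ι₁) p.1 := by
      have := (hφd p).hasFDerivAt.comp p.1 (hasFDerivAt_prodMk_left (𝕜 := ℝ) p.1 p.2)
      exact this
    rw [h1.fderiv]
    rfl
  -- derivatives
  have hFderiv : fderiv ℝ F p₀ = T ∘L B := by
    rw [hFeq]
    exact (T.hasFDerivAt.comp p₀ (hΦd p₀).hasFDerivAt).fderiv
  have hjderiv : fderiv ℝ j p₀ =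
      (ContinuousLinearMap.fst ℝ X Y).prod (S ∘L B) := by
    rw [hjeq]
    exact ((hasFDerivAt_fst (𝕜 := ℝ) (p := p₀)).prodMk
      (S.hasFDerivAt.comp p₀ (hΦd p₀).hasFDerivAt)).fderiv
  -- kernel membership in bilinear terms
  have hker : ∀ v ∈ LinearMap.ker (fderiv ℝ F p₀).toLinearMap, ∀ w : Y, B v (0, w) = 0 := by
    intro v hv w
    rw [LinearMap.mem_ker, hFderiv] at hv
    have hv' : dualIsoReal Y ((B v) ∘L ι₂) = 0 := by
      rw [← hTapp]; exact hv
    have hz : (B v) ∘L ι₂ = 0 := (dualIsoReal_eq_zero_iff Y _).mp hv'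
    have := ContinuousLinearMap.ext_iff.mp hz w
    simpa [hι₂] using this
  have hju : fderiv ℝ j p₀ u = (u.1, S (B u)) := by rw [hjderiv]; rfl
  have hju' : fderiv ℝ j p₀ u' = (u'.1, S (B u')) := by rw [hjderiv]; rfl
  have hSinner : ∀ v : X × Y, ∀ a : X, (inner ℝ (S (B v)) a : ℝ) = B v (a, 0) := by
    intro v a
    rw [hSapp, inner_dualIsoReal]
    simp [hι₁]
  rw [hju, hju']
  unfold symplecticForm
  simp only
  rw [hSinner u u'.1, real_inner_comm, hSinner u' u.1]
  have h1 : B u (u'.1, 0) = B u u' := by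
    have he : ((u'.1, 0) : X × Y) = u' - (0, u'.2) := by ext <;> simp
    rw [he, map_sub, hker u hu u'.2, sub_zero]
  have h2 : B u' (u.1, 0) = B u' u := by
    have he : ((u.1, 0) : X × Y) = u - (0, u.2) := by ext <;> simp
    rw [he, map_sub, hker u' hu' u.2, sub_zero]
  rw [h1, h2, hBsymm u u', sub_self]
end

section
/- Let V : ℝ → ℝ be twice continuously differentiable, E ∈ ℝ, and let α < β be reals with V(x) < E for all x ∈ [α,β] (no turning points in [α,β]). Define φ(x) = ∫_α^x √(2(E − V(t))) dt and a(x) = (2(E − V(x)))^{−1/4} for x ∈ [α,β]. Then φ solves the eikonal equation (φ')²/2 + V = E, a solves the transport equation φ'a' + (1/2)φ''a = 0 on [α,β], and there exists a constant C ≥ 0 (one may take C = (1/2)·sup_{x∈[α,β]} |a''(x)|) such that for every ℏ ∈ (0,1] the WKB function ψ_ℏ(x) = a(x)·exp(i·φ(x)/ℏ) satisfies |−(ℏ²/2)·ψ_ℏ''(x) + (V(x) − E)·ψ_ℏ(x)| ≤ C·ℏ² for all x ∈ [α,β]. That is, ψ_ℏ is a WKB quasimode of order 2 for the Schrödinger operator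 on [α,β]. -/
open Real Set

lemma wkb_alg (u I e A2 A1 aa Φ1 Φ2 Vv Ee : ℂ) (hu : u ≠ 0) (hI : I^2 = -1)
    (htr : Φ1 * A1 + 1/2 * Φ2 * aa = 0) (hei : Φ1^2/2 + Vv - Ee = 0) :
    -(u^2/2) * ((A2 + (A1 * (I*Φ1/u) + aa * (I*Φ2/u))) * e
        + (A1 + aa*(I*Φ1/u)) * (e * (I*Φ1/u))) + (Vv - Ee) * (aa * e)
      = e * (-(u^2/2) * A2) := by
  have h1 : I * Φ1 / u * (I * Φ1 / u) = - (Φ1^2 / (u^2)) := by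
    rw [div_mul_div_comm]
    rw [show I * Φ1 * (I * Φ1) = I^2 * Φ1^2 by ring, hI]
    ring
  have huv : u * u⁻¹ = 1 := mul_inv_cancel₀ hu
  simp only [div_eq_mul_inv]
  linear_combination (-(u^2*u⁻¹)*I*e) * htr + (-(u^2*u⁻¹^2/2)*e*aa*Φ1^2) * hI
    + ((u*u⁻¹+1)/2*e*aa*Φ1^2) * huv + (aa*e) * hei

/-- Away from turning points (`V < E` on `[α,β]`), the phase
`φ(x) = ∫_α^x √(2(E−V))` solves the eikonal equation, the amplitude
`a = (2(E−V))^{−1/4}` solves the transport equation, and the WKB function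
`ψ_ℏ = a·e^{iφ/ℏ}` is a quasimode of order `2` for the Schrödinger operator,
uniformly for `ℏ ∈ (0,1]`. -/
theorem wkb_quasimode_away_from_turning_points
    (V : ℝ → ℝ) (hV : ContDiff ℝ 2 V) (E α β : ℝ) (hαβ : α < β)
    (hE : ∀ x ∈ Icc α β, V x < E)
    (φ : ℝ → ℝ) (hφdef : ∀ x : ℝ, φ x = ∫ t in α..x, Real.sqrt (2 * (E - V t)))
    (a : ℝ → ℝ) (hadef : ∀ x : ℝ, a x = (2 * (E - V x)) ^ (-(1/4 : ℝ))) :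
    (∀ x ∈ Icc α β, (deriv φ x)^2 / 2 + V x = E) ∧
    (∀ x ∈ Icc α β, deriv φ x * deriv a x + (1/2) * deriv (deriv φ) x * a x = 0) ∧
    (∃ C : ℝ, 0 ≤ C ∧ ∀ ℏ ∈ Ioc (0:ℝ) 1, ∀ x ∈ Icc α β,
      ‖(-((ℏ : ℂ)^2 / 2) *
            deriv (deriv (fun y : ℝ =>
              (a y : ℂ) * Complex.exp (Complex.I * (φ y : ℂ) / (ℏ : ℂ)))) x
          + ((V x : ℂ) - (E : ℂ)) *
              ((a x : ℂ) * Complex.exp (Complex.I * (φ x : ℂ) / (ℏ : ℂ))))‖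
        ≤ C * ℏ^2) := by
  have hVc : Continuous V := hV.continuous
  set g : ℝ → ℝ := fun x => 2 * (E - V x) with hg_def
  have hgc : Continuous g := by fun_prop
  set U : Set ℝ := {x | 0 < g x} with hU_def
  have hUo : IsOpen U := isOpen_lt continuous_const hgc
  have hIccU : Icc α β ⊆ U := by
    intro x hx
    have := hE x hx
    simp only [hU_def, hg_def, Set.mem_setOf_eq]
    linarith
  -- derivatives of V
  have hV' : ContDiff ℝ (1 + 1) V := by exact_mod_cast hV
  obtain ⟨hVd, -, hW1⟩ := contDiff_succ_iff_deriv.mp hV'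
  obtain ⟨hWd, hW2c⟩ := contDiff_one_iff_deriv.mp hW1
  set W : ℝ → ℝ := deriv V with hW_def
  set W2 : ℝ → ℝ := deriv W with hW2_def
  have hWc : Continuous W := hW1.continuous
  have hVx : ∀ x, HasDerivAt V (W x) x := fun x => (hVd x).hasDerivAt
  have hWx : ∀ x, HasDerivAt W (W2 x) x := fun x => (hWd x).hasDerivAt
  have hgx : ∀ x, HasDerivAt g (-(2 * W x)) x := by
    intro x
    have := ((hVx x).const_sub E).const_mul 2
    exact this.congr_deriv (by ring)
  -- phase derivative
  set Φ1 : ℝ → ℝ := fun x => Real.sqrt (g x) with hΦ1_def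
  have hΦ1c : Continuous Φ1 := by fun_prop
  have hφ1 : ∀ x, HasDerivAt φ (Φ1 x) x := by
    intro x
    have h0 : HasDerivAt (fun u => ∫ t in α..u, Real.sqrt (2 * (E - V t))) (Φ1 x) x := by
      apply intervalIntegral.integral_hasDerivAt_right
        ((hΦ1c.intervalIntegrable α x))
        (hΦ1c.stronglyMeasurableAtFilter _ _)
        hΦ1c.continuousAt
    have : φ = fun u => ∫ t in α..u, Real.sqrt (2 * (E - V t)) := funext hφdef
    rw [this]; exact h0
  have hdφ : deriv φ = Φ1 := funext fun x => (hφ1 x).deriv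
  -- eikonal
  have heik : ∀ x ∈ Icc α β, (deriv φ x)^2 / 2 + V x = E := by
    intro x hx
    have hgpos : 0 < g x := hIccU hx
    rw [hdφ]
    have : Φ1 x ^ 2 = g x := Real.sq_sqrt hgpos.le
    rw [this]; simp only [hg_def]; ring
  -- amplitude derivative
  have ha : a = fun x => g x ^ (-(1/4 : ℝ)) := funext hadef
  set A1 : ℝ → ℝ := fun x => -(2 * W x) * (-(1/4 : ℝ)) * g x ^ ((-(1/4 : ℝ)) - 1)
    with hA1_def
  have ha1 : ∀ x ∈ U, HasDerivAt a (A1 x) x := by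
    intro x hx
    rw [ha]
    exact (hgx x).rpow_const (Or.inl (ne_of_gt hx))
  set Φ2 : ℝ → ℝ := fun x => -(2 * W x) / (2 * Real.sqrt (g x)) with hΦ2_def
  have hφ2 : ∀ x ∈ U, HasDerivAt Φ1 (Φ2 x) x := by
    intro x hx
    have h := (Real.hasDerivAt_sqrt (ne_of_gt hx)).comp x (hgx x)
    refine h.congr_deriv ?_
    simp only [hΦ2_def]
    field_simp
  -- transport
  have htrans : ∀ x ∈ Icc α β, Φ1 x * A1 x + (1/2) * Φ2 x * a x = 0 := by
    intro x hx
    have hP : (0:ℝ) < g x := hIccU hx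
    have e1 : Real.sqrt (g x) * g x ^ ((-(1/4:ℝ)) - 1) = g x ^ (-(3/4:ℝ)) := by
      rw [Real.sqrt_eq_rpow, ← Real.rpow_add hP]; norm_num
    have e2 : g x ^ (-(1/4:ℝ)) / Real.sqrt (g x) = g x ^ (-(3/4:ℝ)) := by
      rw [Real.sqrt_eq_rpow, ← Real.rpow_sub hP]; norm_num
    have hsn : Real.sqrt (g x) ≠ 0 := ne_of_gt (Real.sqrt_pos.mpr hP)
    simp only [ha, hΦ1_def, hΦ2_def, hA1_def]
    linear_combination (W x / 2) * e1 - (W x / 2) * e2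
  -- second derivative of amplitude
  set A2 : ℝ → ℝ := fun x =>
      -(2 * W2 x) * (-(1/4 : ℝ)) * g x ^ ((-(1/4 : ℝ)) - 1)
      + -(2 * W x) * (-(1/4 : ℝ)) *
          (-(2 * W x) * ((-(1/4 : ℝ)) - 1) * g x ^ ((-(1/4 : ℝ)) - 1 - 1)) with hA2_def
  have hA1d : ∀ x ∈ U, HasDerivAt A1 (A2 x) x := by
    intro x hx
    have hL : HasDerivAt (fun y => -(2 * W y) * (-(1/4 : ℝ))) (-(2 * W2 x) * (-(1/4 : ℝ))) x :=
      (((hWx x).const_mul 2).neg).mul_const _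
    have hR : HasDerivAt (fun y => g y ^ ((-(1/4 : ℝ)) - 1))
        (-(2 * W x) * ((-(1/4 : ℝ)) - 1) * g x ^ ((-(1/4 : ℝ)) - 1 - 1)) x :=
      (hgx x).rpow_const (Or.inl (ne_of_gt hx))
    exact hL.mul hR
  -- the bound
  have hA2cont : ContinuousOn A2 (Icc α β) := by
    have hrp : ∀ p : ℝ, ContinuousOn (fun x => g x ^ p) (Icc α β) :=
      fun p => ContinuousOn.rpow_const hgc.continuousOn
        (fun x hx => Or.inl (ne_of_gt (hIccU hx)))
    apply ContinuousOn.add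
    · exact (((continuous_const.mul hW2c).neg.mul continuous_const).continuousOn).mul (hrp _)
    · exact (((continuous_const.mul hWc).neg.mul continuous_const).continuousOn).mul
        ((((continuous_const.mul hWc).neg.mul continuous_const).continuousOn).mul (hrp _))
  obtain ⟨M, hM⟩ := isCompact_Icc.exists_bound_of_continuousOn hA2cont
  have hM0 : 0 ≤ M := le_trans (norm_nonneg _) (hM α ⟨le_refl _, hαβ.le⟩)
  refine ⟨heik, ?_, M/2, by linarith, ?_⟩
  · -- transport in the stated form
    intro x hx
    have hxU : x ∈ U := hIccU hx
    have h1 : deriv a x = A1 x := (ha1 x hxU).deriv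
    have h2 : deriv (deriv φ) x = Φ2 x := by rw [hdφ]; exact (hφ2 x hxU).deriv
    rw [h2, h1, hdφ]
    have := htrans x hx
    linarith [this]
  · intro ℏ hℏ x hx
    have hxU : x ∈ U := hIccU hx
    have hℏ0 : (ℏ:ℂ) ≠ 0 := by exact_mod_cast ne_of_gt hℏ.1
    set E1 : ℝ → ℂ := fun y => Complex.exp (Complex.I * (φ y : ℂ) / (ℏ : ℂ)) with hE1_def
    set ψ : ℝ → ℂ := fun y => (a y : ℂ) * Complex.exp (Complex.I * (φ y : ℂ) / (ℏ : ℂ))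
      with hψ_def
    set Ψ1 : ℝ → ℂ := fun y =>
      ((A1 y : ℂ) + (a y : ℂ) * (Complex.I * (Φ1 y : ℂ) / (ℏ : ℂ))) * E1 y with hΨ1_def
    have hexp : ∀ y ∈ U, HasDerivAt E1 (E1 y * (Complex.I * (Φ1 y : ℂ) / (ℏ : ℂ))) y := by
      intro y hy
      exact ((((hφ1 y).ofReal_comp).const_mul Complex.I).div_const (ℏ:ℂ)).cexp
    have hψ1 : ∀ y ∈ U, HasDerivAt ψ (Ψ1 y) y := by
      intro y hy
      have h := (((ha1 y hy).ofReal_comp)).mul (hexp y hy)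
      refine h.congr_deriv ?_
      simp only [hΨ1_def]; ring
    have hEqOn : deriv ψ =ᶠ[nhds x] Ψ1 := by
      filter_upwards [hUo.mem_nhds hxU] with y hy
      exact (hψ1 y hy).deriv
    have hdd : deriv (deriv ψ) x = deriv Ψ1 x := hEqOn.deriv_eq
    -- derivative of Ψ1
    have hΨ1d : HasDerivAt Ψ1
        (((A2 x : ℂ) + ((A1 x : ℂ) * (Complex.I * (Φ1 x : ℂ) / (ℏ : ℂ))
            + (a x : ℂ) * (Complex.I * (Φ2 x : ℂ) / (ℏ : ℂ)))) * E1 x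
          + ((A1 x : ℂ) + (a x : ℂ) * (Complex.I * (Φ1 x : ℂ) / (ℏ : ℂ)))
              * (E1 x * (Complex.I * (Φ1 x : ℂ) / (ℏ : ℂ)))) x := by
      have h1 : HasDerivAt (fun y => (A1 y : ℂ)) (A2 x : ℂ) x := (hA1d x hxU).ofReal_comp
      have h2 : HasDerivAt (fun y => (a y : ℂ) * (Complex.I * (Φ1 y : ℂ) / (ℏ:ℂ)))
          ((A1 x : ℂ) * (Complex.I * (Φ1 x : ℂ) / (ℏ:ℂ))
            + (a x : ℂ) * (Complex.I * (Φ2 x : ℂ) / (ℏ:ℂ))) x :=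
        ((ha1 x hxU).ofReal_comp).mul
          ((((hφ2 x hxU).ofReal_comp).const_mul Complex.I).div_const (ℏ:ℂ))
      exact (h1.add h2).mul (hexp x hxU)
    have hDval : deriv Ψ1 x = _ := hΨ1d.deriv
    rw [hdd, hDval]
    -- key algebraic identity
    have htrC : (Φ1 x : ℂ) * (A1 x : ℂ) + (1/2 : ℂ) * (Φ2 x : ℂ) * (a x : ℂ) = 0 := by
      have h := htrans x hx
      have h2 : ((Φ1 x * A1 x + 1/2 * Φ2 x * a x : ℝ) : ℂ) = ((0:ℝ) : ℂ) := by rw [h]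
      push_cast at h2
      linear_combination h2
    have heiC : ((Φ1 x : ℂ))^2 / 2 + (V x : ℂ) - (E : ℂ) = 0 := by
      have := heik x hx
      rw [hdφ] at this
      have h2 : ((Φ1 x)^2 / 2 + V x : ℝ) = E := this
      have := congrArg (fun r : ℝ => (r : ℂ)) h2
      push_cast at this
      linear_combination this
    have hkey :
        (-((ℏ : ℂ)^2 / 2) *
          (((A2 x : ℂ) + ((A1 x : ℂ) * (Complex.I * (Φ1 x : ℂ) / (ℏ : ℂ))
              + (a x : ℂ) * (Complex.I * (Φ2 x : ℂ) / (ℏ : ℂ)))) * E1 x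
            + ((A1 x : ℂ) + (a x : ℂ) * (Complex.I * (Φ1 x : ℂ) / (ℏ : ℂ)))
                * (E1 x * (Complex.I * (Φ1 x : ℂ) / (ℏ : ℂ))))
          + ((V x : ℂ) - (E : ℂ)) * ((a x : ℂ) * Complex.exp (Complex.I * (φ x : ℂ) / (ℏ : ℂ))))
        = E1 x * (-((ℏ : ℂ)^2/2) * (A2 x : ℂ)) := by
      have hE1x : (Complex.exp (Complex.I * (φ x : ℂ) / (ℏ : ℂ))) = E1 x := rfl
      rw [hE1x]
      exact wkb_alg (ℏ:ℂ) Complex.I (E1 x) (A2 x) (A1 x) (a x) (Φ1 x) (Φ2 x) (V x) E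
        hℏ0 Complex.I_sq htrC heiC
    rw [hkey]
    -- estimate
    have habs1 : ‖E1 x‖ = 1 := by
      have : Complex.I * (φ x : ℂ) / (ℏ : ℂ) = ((φ x / ℏ : ℝ) : ℂ) * Complex.I := by
        push_cast; ring
      simp only [hE1_def, this, Complex.norm_exp_ofReal_mul_I]
    rw [norm_mul, habs1, one_mul, norm_mul]
    have : ‖-((ℏ:ℂ)^2/2)‖ = ℏ^2/2 := by
      rw [show -((ℏ:ℂ)^2/2) = ((-(ℏ^2/2) : ℝ) : ℂ) by push_cast; ring, Complex.norm_real, Real.norm_eq_abs]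
      rw [abs_neg, abs_of_nonneg (by positivity)]
    rw [this, Complex.norm_real, Real.norm_eq_abs]
    have hb := hM x hx
    rw [Real.norm_eq_abs] at hb
    nlinarith [sq_nonneg ℏ, abs_nonneg (A2 x), hℏ.1]
end
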